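/- Define in M the Hamiltonians H¹² = (1/2)•(1₂⊗1₂⊗1₂ + σ⊗σ⊗1₂), H¹³ = (1/2)•(1₂⊗1₂⊗1₂ + σ⊗1₂⊗σ), and H²³ = (1/2)•(1₂⊗1₂⊗1₂ + 1₂⊗σ⊗σ). Then H¹², H¹³, H²³ pairwise commute, and Matrix.exp(β•H¹² + β•H¹³ + (J*β)•H²³) = A. -/

import Mathlib

open Matrix Kronecker

noncomputable section

/-- The Pauli z-matrix. -/
def σz : Matrix (Fin 2) (Fin 2) ℂ := !![1, 0; 0, -1]

/-- The threefold tensor product `M₂ ⊗ M₂ ⊗ M₂`, realized via Kronecker products. -/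
abbrev M3 : Type := Matrix (Fin 2 × Fin 2 × Fin 2) (Fin 2 × Fin 2 × Fin 2) ℂ

/-- `tp a b c` is the elementary tensor `a ⊗ b ⊗ c` in `M₂ ⊗ M₂ ⊗ M₂`. -/
def tp (a b c : Matrix (Fin 2) (Fin 2) ℂ) : M3 := a ⊗ₖ (b ⊗ₖ c)

def K₀ (β : ℝ) : ℝ := (Real.exp β + 1) / 2
def K₃ (β : ℝ) : ℝ := (Real.exp β - 1) / 2
def R₀ (β J : ℝ) : ℝ := (Real.exp (J * β) + 1) / 2
def R₃ (β J : ℝ) : ℝ := (Real.exp (J * β) - 1) / 2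

/-- `K¹² = K₀•(1⊗1⊗1) + K₃•(σ⊗σ⊗1)`. -/
def K12 (β : ℝ) : M3 := ((K₀ β : ℝ) : ℂ) • tp 1 1 1 + ((K₃ β : ℝ) : ℂ) • tp σz σz 1

/-- `K¹³ = K₀•(1⊗1⊗1) + K₃•(σ⊗1⊗σ)`. -/
def K13 (β : ℝ) : M3 := ((K₀ β : ℝ) : ℂ) • tp 1 1 1 + ((K₃ β : ℝ) : ℂ) • tp σz 1 σz

/-- `L²³ = R₀•(1⊗1⊗1) + R₃•(1⊗σ⊗σ)`. -/
def L23 (β J : ℝ) : M3 := ((R₀ β J : ℝ) : ℂ) • tp 1 1 1 + ((R₃ β J : ℝ) : ℂ) • tp 1 σz σz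

/-- The transfer operator `A = K¹² K¹³ L²³` of the Ising model with competing interactions. -/
def A (β J : ℝ) : M3 := K12 β * K13 β * L23 β J

/-- `H¹² = (1/2)•(1⊗1⊗1 + σ⊗σ⊗1)`. -/
def H12 : M3 := (1 / 2 : ℂ) • (tp 1 1 1 + tp σz σz 1)

/-- `H¹³ = (1/2)•(1⊗1⊗1 + σ⊗1⊗σ)`. -/
def H13 : M3 := (1 / 2 : ℂ) • (tp 1 1 1 + tp σz 1 σz)

/-- `H²³ = (1/2)•(1⊗1⊗1 + 1⊗σ⊗σ)`. -/
def H23 : M3 := (1 / 2 : ℂ) • (tp 1 1 1 + tp 1 σz σz)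

/-! ### Auxiliary lemmas -/

/-- The sign vector of the Pauli z-matrix. -/
def s : Fin 2 → ℂ := ![1, -1]

lemma σz_diag : σz = Matrix.diagonal s := by
  ext i j
  fin_cases i <;> fin_cases j <;> simp [σz, s, Matrix.diagonal]

lemma tp_diag (u v w : Fin 2 → ℂ) :
    tp (diagonal u) (diagonal v) (diagonal w)
      = diagonal (fun p => u p.1 * (v p.2.1 * w p.2.2)) := by
  rw [tp, diagonal_kronecker_diagonal, diagonal_kronecker_diagonal]

lemma one_eq_diag : (1 : Matrix (Fin 2) (Fin 2) ℂ) = diagonal (fun _ => 1) := by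
  simp [Matrix.diagonal_one]

lemma commute_diagonal (u v : Fin 2 × Fin 2 × Fin 2 → ℂ) :
    Commute (diagonal u) (diagonal v) := by
  unfold Commute SemiconjBy
  simp [Matrix.diagonal_mul_diagonal, mul_comm]

lemma H12_diag : H12 = diagonal (fun p => (1/2 : ℂ) * (1 + s p.1 * s p.2.1)) := by
  rw [H12, one_eq_diag, σz_diag]
  simp only [tp_diag, ← Matrix.diagonal_smul, Matrix.diagonal_add]
  refine congrArg diagonal (funext fun p => ?_)
  obtain ⟨i, j, k⟩ := p
  fin_cases i <;> fin_cases j <;> fin_cases k <;> norm_num [s]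

lemma H13_diag : H13 = diagonal (fun p => (1/2 : ℂ) * (1 + s p.1 * s p.2.2)) := by
  rw [H13, one_eq_diag, σz_diag]
  simp only [tp_diag, ← Matrix.diagonal_smul, Matrix.diagonal_add]
  refine congrArg diagonal (funext fun p => ?_)
  obtain ⟨i, j, k⟩ := p
  fin_cases i <;> fin_cases j <;> fin_cases k <;> norm_num [s]

lemma H23_diag : H23 = diagonal (fun p => (1/2 : ℂ) * (1 + s p.2.1 * s p.2.2)) := by
  rw [H23, one_eq_diag, σz_diag]
  simp only [tp_diag, ← Matrix.diagonal_smul, Matrix.diagonal_add]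
  refine congrArg diagonal (funext fun p => ?_)
  obtain ⟨i, j, k⟩ := p
  fin_cases i <;> fin_cases j <;> fin_cases k <;> norm_num [s]

lemma A_diag (β J : ℝ) : A β J = diagonal (fun p =>
    ((K₀ β : ℂ) + (K₃ β : ℂ) * (s p.1 * s p.2.1)) *
    (((K₀ β : ℂ) + (K₃ β : ℂ) * (s p.1 * s p.2.2)) *
      ((R₀ β J : ℂ) + (R₃ β J : ℂ) * (s p.2.1 * s p.2.2)))) := by
  rw [A, K12, K13, L23, one_eq_diag, σz_diag]
  simp only [tp_diag, ← Matrix.diagonal_smul, Matrix.diagonal_add, Matrix.diagonal_mul_diagonal]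
  refine congrArg diagonal (funext fun p => ?_)
  obtain ⟨i, j, k⟩ := p
  fin_cases i <;> fin_cases j <;> fin_cases k <;> norm_num [s] <;> ring

/-- The Hamiltonians `H¹², H¹³, H²³` pairwise commute and
`exp(β•H¹² + β•H¹³ + (Jβ)•H²³) = A`. -/
theorem ising_hamiltonians_commute_and_exp_eq_transfer_operator
    (β J : ℝ) (hβ : 0 < β) (hJ : 0 < J) :
    Commute H12 H13 ∧ Commute H12 H23 ∧ Commute H13 H23 ∧
      NormedSpace.exp ((β : ℂ) • H12 + (β : ℂ) • H13 + ((J * β : ℝ) : ℂ) • H23) = A β J := by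
  refine ⟨?_, ?_, ?_, ?_⟩
  · rw [H12_diag, H13_diag]; exact _root_.commute_diagonal _ _
  · rw [H12_diag, H23_diag]; exact _root_.commute_diagonal _ _
  · rw [H13_diag, H23_diag]; exact _root_.commute_diagonal _ _
  · simp only [H12_diag, H13_diag, H23_diag, ← Matrix.diagonal_smul, Matrix.diagonal_add]
    rw [Matrix.exp_diagonal, A_diag]
    refine congrArg diagonal (funext fun p => ?_)
    rw [Pi.coe_exp, ← Complex.exp_eq_exp_ℂ]
    simp only [Pi.smul_apply, Pi.add_apply, smul_eq_mul]
    obtain ⟨i, j, k⟩ := p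
    fin_cases i <;> fin_cases j <;> fin_cases k <;>
      · simp only [s, K₀, K₃, R₀, R₃, Pi.add_apply, Pi.smul_apply, Matrix.cons_val_zero,
          Matrix.cons_val_one, Matrix.head_cons, smul_eq_mul, Complex.ofReal_div,
          Complex.ofReal_add, Complex.ofReal_sub, Complex.ofReal_one, Complex.ofReal_exp,
          Complex.ofReal_mul]
        norm_num [← Complex.exp_add]
        try ring_nf
        try simp [← Complex.exp_add]
        try ring
        try (rw [sq, ← Complex.exp_add, ← Complex.exp_add]; exact congrArg Complex.exp (by ring))
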